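/- Let s ≥ 1, h₁, h₂ be integers with 0 ≤ h₁ ≤ h₂ ≤ s, and let r ≥ 0 be a real number with r ≠ 1. Define F(z₁, …, z_s, w₁, …, w_s) = ∏_{i=1}^s ∏_{j=1}^s (1 − z_i·w_j)^{−1}, which is holomorphic in a neighbourhood of the point where all variables equal −r. Then the mixed partial derivative (∂/∂w₁)⋯(∂/∂w_{s−h₂})·(∂/∂z₁)⋯(∂/∂z_{s−h₁}) F, evaluated at z₁ = ⋯ = z_s = w₁ = ⋯ = w_s = −r, equals ( (−s·r)^{h₂−h₁} / (1 − r²)^{s²+2s−h₁−h₂} ) · Σ_{k=0}^{s−h₂} C(s−h₂, k)·C(s−h₁, h₂−h₁+k)·(s−k−h₂)!·(s²r²)^k. -/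

import Mathlib

namespace MixedDeriv

/-- The partial derivative of a function of finitely many complex variables
with respect to the variable `k`. -/
noncomputable def pd {ι : Type*} [DecidableEq ι] (k : ι) (F : (ι → ℂ) → ℂ) : (ι → ℂ) → ℂ :=
  fun v => deriv (fun t => F (Function.update v k t)) (v k)

variable {ι : Type*} [DecidableEq ι] [Fintype ι]

lemma update_mem_nhds {U : Set (ι → ℂ)} (hU : IsOpen U) {v : ι → ℂ} (hv : v ∈ U) (k : ι) :
    ∀ᶠ t in nhds (v k), Function.update v k t ∈ U := by
  have hca : ContinuousAt (fun t : ℂ => Function.update v k t) (v k) :=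
    (hasDerivAt_update v k (v k)).differentiableAt.continuousAt
  have := hca.preimage_mem_nhds (hU.mem_nhds (by simpa using hv))
  exact this

/-- If two functions agree on an open set, so do their partial derivatives. -/
lemma pd_congr {F G : (ι → ℂ) → ℂ} {U : Set (ι → ℂ)} (hU : IsOpen U)
    (h : Set.EqOn F G U) (k : ι) : Set.EqOn (pd k F) (pd k G) U := by
  intro v hv
  have : (fun t => F (Function.update v k t)) =ᶠ[nhds (v k)] fun t => G (Function.update v k t) :=
    (update_mem_nhds hU hv k).mono fun t ht => h ht
  exact this.deriv_eq

lemma pd_congr_foldr {U : Set (ι → ℂ)} (hU : IsOpen U) (L : List ι) {F G : (ι → ℂ) → ℂ}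
    (h : Set.EqOn F G U) : Set.EqOn (L.foldr pd F) (L.foldr pd G) U := by
  induction L with
  | nil => exact h
  | cons k L ih => exact pd_congr hU ih k

/-- pd of a function that is ∞-smooth on an open set agrees on that set with an
∞-smooth function (namely the directional fderiv). -/
lemma pd_smooth {U : Set (ι → ℂ)} (hU : IsOpen U) {F : (ι → ℂ) → ℂ}
    (hF : ContDiffOn ℂ (⊤ : ℕ∞) F U) (k : ι) :
    ContDiffOn ℂ (⊤ : ℕ∞) (fun v => fderiv ℂ F v (Pi.single k 1)) U ∧
      Set.EqOn (pd k F) (fun v => fderiv ℂ F v (Pi.single k 1)) U := by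
  constructor
  · have h1 : ContDiffOn ℂ (⊤ : ℕ∞) (fderiv ℂ F) U :=
      hF.fderiv_of_isOpen hU (by exact_mod_cast le_top)
    exact h1.clm_apply contDiffOn_const
  · intro v hv
    have hdF : DifferentiableAt ℂ F v :=
      (hF.differentiableOn (by simp)).differentiableAt (hU.mem_nhds hv)
    have hupd : HasDerivAt (fun t : ℂ => Function.update v k t) (Pi.single k 1) (v k) :=
      hasDerivAt_update v k (v k)
    have hcomp : HasDerivAt (fun t => F (Function.update v k t))
        (fderiv ℂ F v (Pi.single k 1)) (v k) := by
      have := hdF.hasFDerivAt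
      rw [show v = Function.update v k (v k) by simp] at this
      have h3 := this.comp_hasDerivAt (v k) hupd
      simp only [Function.update_eq_self] at h3
      exact h3
    exact hcomp.deriv

set_option linter.unusedSectionVars false

def NiceOn (U : Set (ι → ℂ)) (F : (ι → ℂ) → ℂ) : Prop :=
  ∃ G, ContDiffOn ℂ (⊤ : ℕ∞) G U ∧ Set.EqOn F G U

lemma NiceOn.of_contDiffOn {U : Set (ι → ℂ)} {F : (ι → ℂ) → ℂ}
    (h : ContDiffOn ℂ (⊤ : ℕ∞) F U) : NiceOn U F := ⟨F, h, fun _ _ => rfl⟩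

lemma niceOn_pd {U : Set (ι → ℂ)} (hU : IsOpen U) {F : (ι → ℂ) → ℂ}
    (h : NiceOn U F) (k : ι) : NiceOn U (pd k F) := by
  obtain ⟨G, hG, hFG⟩ := h
  obtain ⟨h1, h2⟩ := pd_smooth hU hG k
  exact ⟨_, h1, (pd_congr hU hFG k).trans h2⟩

lemma NiceOn.foldr_pd {U : Set (ι → ℂ)} (hU : IsOpen U) {F : (ι → ℂ) → ℂ}
    (h : NiceOn U F) (L : List ι) : NiceOn U (L.foldr pd F) := by
  induction L with
  | nil => exact h
  | cons k L ih => exact niceOn_pd hU ih k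

lemma NiceOn.differentiableAt_line {U : Set (ι → ℂ)} (hU : IsOpen U) {F : (ι → ℂ) → ℂ}
    (h : NiceOn U F) {v : ι → ℂ} (hv : v ∈ U) (k : ι) :
    DifferentiableAt ℂ (fun t => F (Function.update v k t)) (v k) := by
  obtain ⟨G, hG, hFG⟩ := h
  have hev : (fun t => F (Function.update v k t)) =ᶠ[nhds (v k)]
      fun t => G (Function.update v k t) :=
    (update_mem_nhds hU hv k).mono fun t ht => hFG ht
  have hdG : DifferentiableAt ℂ G v :=
    (hG.differentiableOn (by simp)).differentiableAt (hU.mem_nhds hv)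
  have : DifferentiableAt ℂ (fun t => G (Function.update v k t)) (v k) := by
    have := hdG.hasFDerivAt
    rw [show v = Function.update v k (v k) by simp] at this
    exact (this.comp_hasDerivAt (v k) (hasDerivAt_update v k (v k))).differentiableAt
  exact hev.differentiableAt_iff.mpr this

/-- pd of a finite sum of nice functions. -/
lemma pd_sum {U : Set (ι → ℂ)} (hU : IsOpen U) {κ : Type*} (T : Finset κ)
    (f : κ → (ι → ℂ) → ℂ) (hf : ∀ t ∈ T, NiceOn U (f t)) (k : ι) :
    Set.EqOn (pd k (fun v => ∑ t ∈ T, f t v)) (fun v => ∑ t ∈ T, pd k (f t) v) U := by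
  intro v hv
  simp only [pd]
  rw [deriv_fun_sum fun t ht => (hf t ht).differentiableAt_line hU hv k]

/-- pd pulls out a factor not depending on coordinate `k`. -/
lemma pd_const_mul {c G : (ι → ℂ) → ℂ} {k : ι}
    (hc : ∀ v t, c (Function.update v k t) = c v) :
    pd k (fun v => c v * G v) = fun v => c v * pd k G v := by
  funext v
  simp only [pd]
  have : (fun t => c (Function.update v k t) * G (Function.update v k t)) =
      fun t => c v * G (Function.update v k t) := by
    funext t; rw [hc]
  rw [this, deriv_const_mul_field]


/-- `F(z, w) = ∏_{i=1}^s ∏_{j=1}^s (1 - z_i w_j)⁻¹`, with the `z`-variables indexed by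
`Sum.inl` and the `w`-variables indexed by `Sum.inr`. -/
noncomputable def FF (s : ℕ) : ((Fin s ⊕ Fin s) → ℂ) → ℂ :=
  fun v => ∏ i : Fin s, ∏ j : Fin s, (1 - v (Sum.inl i) * v (Sum.inr j))⁻¹

variable {s : ℕ}

def U (s : ℕ) : Set ((Fin s ⊕ Fin s) → ℂ) :=
  {v | ∀ i j, 1 - v (Sum.inl i) * v (Sum.inr j) ≠ 0}

lemma isOpen_U : IsOpen (U s) := by
  have : U s = ⋂ i, ⋂ j, {v : (Fin s ⊕ Fin s) → ℂ | 1 - v (Sum.inl i) * v (Sum.inr j) ≠ 0} := by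
    ext v; simp [U]
  rw [this]
  refine isOpen_iInter_of_finite fun i => isOpen_iInter_of_finite fun j => ?_
  have hc : Continuous fun v : (Fin s ⊕ Fin s) → ℂ => 1 - v (Sum.inl i) * v (Sum.inr j) := by
    continuity
  exact isOpen_compl_iff.mpr (isClosed_eq hc continuous_const)

/-- `u i j v = (1 - z_i w_j)⁻¹`. -/
noncomputable def uu (s : ℕ) (i j : Fin s) : ((Fin s ⊕ Fin s) → ℂ) → ℂ :=
  fun v => (1 - v (Sum.inl i) * v (Sum.inr j))⁻¹

noncomputable def gg (s : ℕ) (i : Fin s) : ((Fin s ⊕ Fin s) → ℂ) → ℂ :=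
  fun v => ∑ j, v (Sum.inr j) * uu s i j v

noncomputable def fb (s : ℕ) (b : Fin s) : ((Fin s ⊕ Fin s) → ℂ) → ℂ :=
  fun v => ∑ i, v (Sum.inl i) * uu s i b v

noncomputable def gp (s : ℕ) (i b : Fin s) : ((Fin s ⊕ Fin s) → ℂ) → ℂ :=
  fun v => uu s i b v + v (Sum.inr b) * v (Sum.inl i) * (uu s i b v) ^ 2

noncomputable def Phi (s : ℕ) (A : Finset (Fin s)) : ((Fin s ⊕ Fin s) → ℂ) → ℂ :=
  fun v => FF s v * ∏ i ∈ A, gg s i v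

lemma contDiffOn_coord (k : Fin s ⊕ Fin s) :
    ContDiffOn ℂ (⊤ : ℕ∞) (fun v : (Fin s ⊕ Fin s) → ℂ => v k) (U s) :=
  ((ContinuousLinearMap.proj k : ((Fin s ⊕ Fin s) → ℂ) →L[ℂ] ℂ)).contDiff.contDiffOn

lemma contDiffOn_uu (i j : Fin s) : ContDiffOn ℂ (⊤ : ℕ∞) (uu s i j) (U s) := by
  refine ContDiffOn.inv ?_ ?_
  · exact contDiffOn_const.sub ((contDiffOn_coord _).mul (contDiffOn_coord _))
  · exact fun v hv => hv i j

lemma contDiffOn_FF : ContDiffOn ℂ (⊤ : ℕ∞) (FF s) (U s) := by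
  exact contDiffOn_prod fun i _ => contDiffOn_prod fun j _ => contDiffOn_uu i j

lemma contDiffOn_gg (i : Fin s) : ContDiffOn ℂ (⊤ : ℕ∞) (gg s i) (U s) := by
  exact ContDiffOn.sum fun j _ => (contDiffOn_coord _).mul (contDiffOn_uu i j)

lemma contDiffOn_fb (b : Fin s) : ContDiffOn ℂ (⊤ : ℕ∞) (fb s b) (U s) := by
  exact ContDiffOn.sum fun i _ => (contDiffOn_coord _).mul (contDiffOn_uu i b)

lemma contDiffOn_gp (i b : Fin s) : ContDiffOn ℂ (⊤ : ℕ∞) (gp s i b) (U s) := by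
  exact (contDiffOn_uu i b).add
    (((contDiffOn_coord _).mul (contDiffOn_coord _)).mul ((contDiffOn_uu i b).pow 2))

lemma contDiffOn_Phi (A : Finset (Fin s)) : ContDiffOn ℂ (⊤ : ℕ∞) (Phi s A) (U s) :=
  contDiffOn_FF.mul (contDiffOn_prod fun i _ => contDiffOn_gg i)


lemma hasDerivAt_invlin {c t₀ : ℂ} (h : 1 - t₀ * c ≠ 0) :
    HasDerivAt (fun t => (1 - t * c)⁻¹) (c * ((1 - t₀ * c)⁻¹) ^ 2) t₀ := by
  have h1 : HasDerivAt (fun t : ℂ => 1 - t * c) (-c) t₀ := by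
    simpa using ((hasDerivAt_id t₀).mul_const c).const_sub 1
  have h2 := h1.inv h
  convert h2 using 1
  case e'_4 => rfl
  case e'_5 => rfl
  case e'_8 => rfl
  rw [neg_neg, div_eq_mul_inv, inv_pow]

lemma hasDerivAt_prod_inv (w : Fin s → ℂ) (t₀ : ℂ) (h : ∀ j, 1 - t₀ * w j ≠ 0) :
    HasDerivAt (fun t => ∏ j, (1 - t * w j)⁻¹)
      ((∏ j, (1 - t₀ * w j)⁻¹) * ∑ j, w j * (1 - t₀ * w j)⁻¹) t₀ := by
  have h0 : ∀ j : Fin s, HasDerivAt (fun t => (1 - t * w j)⁻¹)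
      (w j * ((1 - t₀ * w j)⁻¹) ^ 2) t₀ := fun j => hasDerivAt_invlin (h j)
  have h1 := HasDerivAt.fun_finsetProd (u := Finset.univ) (fun j _ => h0 j)
  convert h1 using 1
  case e'_4 => rfl
  case e'_5 => rfl
  rw [Finset.mul_sum]
  refine Finset.sum_congr rfl fun j _ => ?_
  rw [smul_eq_mul, ← Finset.mul_prod_erase Finset.univ
    (fun j' => (1 - t₀ * w j')⁻¹) (Finset.mem_univ j)]
  ring

lemma update_inl_inr (v : (Fin s ⊕ Fin s) → ℂ) (i : Fin s) (t : ℂ) (j : Fin s) :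
    Function.update v (Sum.inl i) t (Sum.inr j) = v (Sum.inr j) :=
  Function.update_of_ne (by simp) _ _

lemma update_inr_inl (v : (Fin s ⊕ Fin s) → ℂ) (b : Fin s) (t : ℂ) (i : Fin s) :
    Function.update v (Sum.inr b) t (Sum.inl i) = v (Sum.inl i) :=
  Function.update_of_ne (by simp) _ _

/-- Key computation 1: z-derivative. -/
lemma K1 {A : Finset (Fin s)} {i : Fin s} (hi : i ∉ A) :
    Set.EqOn (pd (Sum.inl i) (Phi s A)) (Phi s (insert i A)) (U s) := by
  intro v hv
  have hgg : ∀ t (i' : Fin s), i' ≠ i →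
      gg s i' (Function.update v (Sum.inl i) t) = gg s i' v := by
    intro t i' hne
    unfold gg uu
    refine Finset.sum_congr rfl fun j _ => ?_
    rw [update_inl_inr, Function.update_of_ne (by simp [hne]) _ _]
  have hFF : ∀ t, FF s (Function.update v (Sum.inl i) t) =
      (∏ j, (1 - t * v (Sum.inr j))⁻¹) *
        ∏ i' ∈ Finset.univ.erase i, ∏ j, (1 - v (Sum.inl i') * v (Sum.inr j))⁻¹ := by
    intro t
    unfold FF
    rw [← Finset.mul_prod_erase Finset.univ _ (Finset.mem_univ i)]
    congr 1
    · exact Finset.prod_congr rfl fun j _ => by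
        rw [update_inl_inr, Function.update_self]
    · refine Finset.prod_congr rfl fun i' hi' => Finset.prod_congr rfl fun j _ => ?_
      rw [update_inl_inr, Function.update_of_ne (by simp [Finset.mem_erase.mp hi' |>.1]) _ _]
  have hline : ∀ t, Phi s A (Function.update v (Sum.inl i) t) =
      ((∏ j, (1 - t * v (Sum.inr j))⁻¹) *
        ∏ i' ∈ Finset.univ.erase i, ∏ j, (1 - v (Sum.inl i') * v (Sum.inr j))⁻¹) *
        ∏ i' ∈ A, gg s i' v := by
    intro t
    unfold Phi
    rw [hFF]
    congr 1
    exact Finset.prod_congr rfl fun i' hi' => hgg t i' (fun h => hi (h ▸ hi'))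
  have hne : ∀ j, 1 - v (Sum.inl i) * v (Sum.inr j) ≠ 0 := fun j => hv i j
  have hprod := hasDerivAt_prod_inv (fun j => v (Sum.inr j)) (v (Sum.inl i))
    (fun j => hne j)
  have hD : HasDerivAt (fun t => Phi s A (Function.update v (Sum.inl i) t))
      ((((∏ j, (1 - v (Sum.inl i) * v (Sum.inr j))⁻¹) *
          ∑ j, v (Sum.inr j) * (1 - v (Sum.inl i) * v (Sum.inr j))⁻¹) *
        ∏ i' ∈ Finset.univ.erase i, ∏ j, (1 - v (Sum.inl i') * v (Sum.inr j))⁻¹) *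
        ∏ i' ∈ A, gg s i' v) (v (Sum.inl i)) := by
    have := (hprod.mul_const
        (∏ i' ∈ Finset.univ.erase i, ∏ j, (1 - v (Sum.inl i') * v (Sum.inr j))⁻¹)).mul_const
        (∏ i' ∈ A, gg s i' v)
    refine HasDerivAt.congr_deriv (this.congr_of_eventuallyEq ?_) rfl
    filter_upwards [] with t
    rw [hline t]
  have hderiv : pd (Sum.inl i) (Phi s A) v = _ := hD.deriv
  rw [hderiv]
  unfold Phi FF gg uu
  rw [Finset.prod_insert hi,
    ← Finset.mul_prod_erase Finset.univ
      (fun i' => ∏ j, (1 - v (Sum.inl i') * v (Sum.inr j))⁻¹) (Finset.mem_univ i)]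
  ring


lemma hasDerivAt_gfactor {c C t₀ : ℂ} (h : 1 - t₀ * c ≠ 0) :
    HasDerivAt (fun t => t * (1 - t * c)⁻¹ + C)
      ((1 - t₀ * c)⁻¹ + t₀ * (c * ((1 - t₀ * c)⁻¹) ^ 2)) t₀ := by
  have := ((hasDerivAt_id t₀).mul (hasDerivAt_invlin h)).add_const C
  simpa using this

/-- Key computation 2: w-derivative. -/
lemma K2 (A : Finset (Fin s)) (b : Fin s) :
    Set.EqOn (pd (Sum.inr b) (Phi s A))
      (fun v => fb s b v * Phi s A v + ∑ i ∈ A, gp s i b v * Phi s (A.erase i) v) (U s) := by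
  intro v hv
  set t₀ := v (Sum.inr b) with ht₀
  set C₂ := ∏ i', ∏ j ∈ Finset.univ.erase b, uu s i' j v with hC₂
  set Ci : Fin s → ℂ := fun i => ∑ j ∈ Finset.univ.erase b, v (Sum.inr j) * uu s i j v with hCi
  have hupdr : ∀ t j, j ≠ b → Function.update v (Sum.inr b) t (Sum.inr j) = v (Sum.inr j) :=
    fun t j hj => Function.update_of_ne (by simp [hj]) _ _
  have hne : ∀ i' : Fin s, 1 - t₀ * v (Sum.inl i') ≠ 0 := by
    intro i'
    rw [mul_comm]
    exact hv i' b
  -- the line function in explicit form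
  have hgg : ∀ t (i' : Fin s), gg s i' (Function.update v (Sum.inr b) t) =
      t * (1 - t * v (Sum.inl i'))⁻¹ + Ci i' := by
    intro t i'
    unfold gg uu
    rw [← Finset.add_sum_erase Finset.univ _ (Finset.mem_univ b)]
    congr 1
    · rw [Function.update_self, update_inr_inl]; ring_nf
    · refine Finset.sum_congr rfl fun j hj => ?_
      unfold uu
      rw [hupdr t j (Finset.mem_erase.mp hj).1, update_inr_inl]
  have hFF : ∀ t, FF s (Function.update v (Sum.inr b) t) =
      (∏ i', (1 - t * v (Sum.inl i'))⁻¹) * C₂ := by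
    intro t
    unfold FF
    rw [hC₂, ← Finset.prod_mul_distrib]
    refine Finset.prod_congr rfl fun i' _ => ?_
    rw [← Finset.mul_prod_erase Finset.univ _ (Finset.mem_univ b)]
    congr 1
    · rw [Function.update_self, update_inr_inl]; ring_nf
    · refine Finset.prod_congr rfl fun j hj => ?_
      unfold uu
      rw [hupdr t j (Finset.mem_erase.mp hj).1, update_inr_inl]
  have hline : ∀ t, Phi s A (Function.update v (Sum.inr b) t) =
      ((∏ i', (1 - t * v (Sum.inl i'))⁻¹) * C₂) *
        ∏ i' ∈ A, (t * (1 - t * v (Sum.inl i'))⁻¹ + Ci i') := by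
    intro t
    unfold Phi
    rw [hFF]
    congr 1
    exact Finset.prod_congr rfl fun i' _ => hgg t i'
  -- derivatives of the pieces
  have hP := hasDerivAt_prod_inv (fun i' => v (Sum.inl i')) t₀ hne
  have hQ := HasDerivAt.fun_finsetProd (u := A)
    (f := fun i' t => t * (1 - t * v (Sum.inl i'))⁻¹ + Ci i')
    (f' := fun i' => (1 - t₀ * v (Sum.inl i'))⁻¹ +
      t₀ * (v (Sum.inl i') * ((1 - t₀ * v (Sum.inl i'))⁻¹) ^ 2))
    (fun i' _ => hasDerivAt_gfactor (hne i'))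
  have htot := (hP.mul_const C₂).mul hQ
  -- identify values at t₀ with the `gg`/`uu` language
  have huu : ∀ i' : Fin s, (1 - t₀ * v (Sum.inl i'))⁻¹ = uu s i' b v := by
    intro i'; unfold uu; rw [mul_comm]
  have hggt : ∀ i' : Fin s, t₀ * (1 - t₀ * v (Sum.inl i'))⁻¹ + Ci i' = gg s i' v := by
    intro i'
    rw [← hgg t₀ i', ht₀, Function.update_eq_self]
  have hgp : ∀ i' : Fin s, (1 - t₀ * v (Sum.inl i'))⁻¹ +
      t₀ * (v (Sum.inl i') * ((1 - t₀ * v (Sum.inl i'))⁻¹) ^ 2) = gp s i' b v := by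
    intro i'
    unfold gp
    rw [huu i']
    ring
  have hFFv : (∏ i', (1 - t₀ * v (Sum.inl i'))⁻¹) * C₂ = FF s v := by
    rw [← hFF t₀, ht₀, Function.update_eq_self]
  have hS : ∑ i', v (Sum.inl i') * (1 - t₀ * v (Sum.inl i'))⁻¹ = fb s b v := by
    unfold fb
    exact Finset.sum_congr rfl fun i' _ => by rw [huu i']
  have hval := htot.deriv
  beta_reduce at hval
  have hpd : pd (Sum.inr b) (Phi s A) v =
      deriv (fun t => (∏ i', (1 - t * v (Sum.inl i'))⁻¹) * C₂ *
        ∏ i' ∈ A, (t * (1 - t * v (Sum.inl i'))⁻¹ + Ci i')) t₀ :=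
    congrArg (fun f => deriv f t₀) (funext hline)
  rw [hpd]
  erw [hval]
  simp only [smul_eq_mul, hggt, hgp]
  rw [hS, Finset.mul_sum]
  congr 1
  · unfold Phi
    rw [← hFFv]
    ring
  · refine Finset.sum_congr rfl fun i hi => ?_
    unfold Phi
    rw [← hFFv]
    ring


lemma niceOn_mul {U : Set ((Fin s ⊕ Fin s) → ℂ)} {F G : ((Fin s ⊕ Fin s) → ℂ) → ℂ}
    (hF : NiceOn U F) (hG : NiceOn U G) : NiceOn U (fun v => F v * G v) := by
  obtain ⟨F', hF', hFe⟩ := hF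
  obtain ⟨G', hG', hGe⟩ := hG
  exact ⟨fun v => F' v * G' v, hF'.mul hG', fun v hv => by simp [hFe hv, hGe hv]⟩

/-- Iterated z-derivatives of `FF`. -/
lemma zfold (L : List (Fin s)) (hL : L.Nodup) :
    Set.EqOn ((L.map Sum.inl).foldr pd (FF s)) (Phi s L.toFinset) (U s) := by
  induction L with
  | nil =>
    intro v hv
    simp [Phi]
  | cons i L ih =>
    have hnd := List.nodup_cons.mp hL
    have h1 : Set.EqOn (pd (Sum.inl i) ((L.map Sum.inl).foldr pd (FF s)))
        (pd (Sum.inl i) (Phi s L.toFinset)) (U s) := pd_congr isOpen_U (ih hnd.2) _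
    have h2 := K1 (A := L.toFinset) (i := i) (by simpa using hnd.1)
    intro v hv
    have : (((i :: L).map Sum.inl).foldr pd (FF s)) v =
        pd (Sum.inl i) ((L.map Sum.inl).foldr pd (FF s)) v := rfl
    rw [this, h1 hv, h2 hv, List.toFinset_cons]

lemma uu_update_inr {i b : Fin s} (j : Fin s) (hj : j ≠ b) (v : (Fin s ⊕ Fin s) → ℂ) (t : ℂ) :
    uu s i b (Function.update v (Sum.inr j) t) = uu s i b v := by
  unfold uu
  rw [update_inr_inl, Function.update_of_ne (by simp [Ne.symm hj, (hj : ¬ (j = b))]) _ _]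

lemma fb_update {b : Fin s} (j : Fin s) (hj : j ≠ b) (v : (Fin s ⊕ Fin s) → ℂ) (t : ℂ) :
    fb s b (Function.update v (Sum.inr j) t) = fb s b v := by
  unfold fb
  exact Finset.sum_congr rfl fun i _ => by rw [update_inr_inl, uu_update_inr j hj]

lemma gp_update {i b : Fin s} (j : Fin s) (hj : j ≠ b) (v : (Fin s ⊕ Fin s) → ℂ) (t : ℂ) :
    gp s i b (Function.update v (Sum.inr j) t) = gp s i b v := by
  unfold gp
  rw [update_inr_inl, uu_update_inr j hj,
    Function.update_of_ne (by simp [Ne.symm hj, (hj : ¬ (j = b))]) _ _]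

/-- Linearity + pull-out of prefactors for iterated w-derivatives. -/
lemma LIN {κ : Type*} (M : List (Fin s)) (T : Finset κ)
    (c : κ → ((Fin s ⊕ Fin s) → ℂ) → ℂ) (A : κ → Finset (Fin s))
    (hc1 : ∀ t ∈ T, ContDiffOn ℂ (⊤ : ℕ∞) (c t) (U s))
    (hc2 : ∀ t ∈ T, ∀ j ∈ M, ∀ v x, c t (Function.update v (Sum.inr j) x) = c t v) :
    Set.EqOn ((M.map Sum.inr).foldr pd (fun v => ∑ t ∈ T, c t v * Phi s (A t) v))
      (fun v => ∑ t ∈ T, c t v * ((M.map Sum.inr).foldr pd (Phi s (A t))) v) (U s) := by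
  induction M with
  | nil => intro v hv; rfl
  | cons j M ih =>
    have step1 : Set.EqOn ((M.map Sum.inr).foldr pd (fun v => ∑ t ∈ T, c t v * Phi s (A t) v))
        (fun v => ∑ t ∈ T, c t v * ((M.map Sum.inr).foldr pd (Phi s (A t))) v) (U s) :=
      ih (fun t ht j' hj' => hc2 t ht j' (List.mem_cons_of_mem _ hj'))
    have step2 := pd_congr isOpen_U step1 (Sum.inr j)
    have hnice : ∀ t ∈ T, NiceOn (U s)
        (fun v => c t v * ((M.map Sum.inr).foldr pd (Phi s (A t))) v) := fun t ht =>
      niceOn_mul (NiceOn.of_contDiffOn (hc1 t ht))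
        ((NiceOn.of_contDiffOn (contDiffOn_Phi (A t))).foldr_pd isOpen_U _)
    have step3 := pd_sum isOpen_U T _ hnice (Sum.inr j)
    intro v hv
    have e0 : (((j :: M).map Sum.inr).foldr pd (fun v => ∑ t ∈ T, c t v * Phi s (A t) v)) v =
        pd (Sum.inr j) ((M.map Sum.inr).foldr pd (fun v => ∑ t ∈ T, c t v * Phi s (A t) v)) v :=
      rfl
    rw [e0, step2 hv, step3 hv]
    refine Finset.sum_congr rfl fun t ht => ?_
    have e1 := pd_const_mul (c := c t) (G := (M.map Sum.inr).foldr pd (Phi s (A t)))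
      (k := Sum.inr j) (fun v x => hc2 t ht j List.mem_cons_self v x)
    exact congrFun e1 v

noncomputable def qq (r : ℝ) : ℂ := (1 - (r : ℂ) ^ 2)⁻¹
noncomputable def XX (s : ℕ) (r : ℝ) : ℂ := (-(s : ℂ) * (r : ℂ)) * qq r

noncomputable def Sval (s : ℕ) (r : ℝ) (a b : ℕ) : ℂ :=
  ∑ k ∈ Finset.range (b + 1), (Nat.choose b k : ℂ) * (Nat.choose a k : ℂ) *
    (Nat.factorial k : ℂ) * XX s r ^ (a - k) * XX s r ^ (b - k) * (qq r ^ 2) ^ k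

noncomputable def Tval (s : ℕ) (r : ℝ) (a b : ℕ) : ℂ := qq r ^ (s ^ 2) * Sval s r a b

section Eval
variable {r : ℝ}

lemma pt_mem_U (h : (1 : ℂ) - (r : ℂ) ^ 2 ≠ 0) : (fun _ => (-(r : ℂ)) : (Fin s ⊕ Fin s) → ℂ) ∈ U s := by
  intro i j
  have e : (1 : ℂ) - (-(r:ℂ)) * (-(r:ℂ)) = 1 - (r:ℂ) ^ 2 := by ring
  rw [e]
  exact h

lemma uu_pt (i j : Fin s) : uu s i j (fun _ => (-(r : ℂ))) = qq r := by
  unfold uu qq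
  congr 1
  ring

lemma FF_pt : FF s (fun _ => (-(r : ℂ))) = qq r ^ (s ^ 2) := by
  have e : ((1:ℂ) - (-(r:ℂ)) * (-(r:ℂ)))⁻¹ = qq r := by
    unfold qq; congr 1; ring
  unfold FF
  simp only [e, Finset.prod_const, Finset.card_univ, Fintype.card_fin]
  rw [← pow_mul, ← sq]

lemma gg_pt (i : Fin s) : gg s i (fun _ => (-(r : ℂ))) = XX s r := by
  unfold gg
  simp only [uu_pt, Finset.sum_const, Finset.card_univ, Fintype.card_fin, nsmul_eq_mul]
  unfold XX
  ring

lemma fb_pt (b : Fin s) : fb s b (fun _ => (-(r : ℂ))) = XX s r := by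
  unfold fb
  simp only [uu_pt, Finset.sum_const, Finset.card_univ, Fintype.card_fin, nsmul_eq_mul]
  unfold XX
  ring

lemma gp_pt (h : (1 : ℂ) - (r : ℂ) ^ 2 ≠ 0) (i b : Fin s) :
    gp s i b (fun _ => (-(r : ℂ))) = qq r ^ 2 := by
  have key : ((1:ℂ) - (r:ℂ) ^ 2) * qq r = 1 := mul_inv_cancel₀ h
  unfold gp
  rw [uu_pt]
  linear_combination (-(qq r)) * key

lemma Phi_pt (A : Finset (Fin s)) :
    Phi s A (fun _ => (-(r : ℂ))) = qq r ^ (s ^ 2) * XX s r ^ A.card := by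
  unfold Phi
  rw [FF_pt]
  congr 1
  rw [Finset.prod_congr rfl fun i _ => gg_pt i, Finset.prod_const]

end Eval

lemma chooseFact (a k : ℕ) :
    (Nat.choose a (k + 1)) * Nat.factorial (k + 1) = a * Nat.choose (a - 1) k * Nat.factorial k := by
  cases a with
  | zero => simp
  | succ a' =>
    have h := Nat.add_one_mul_choose_eq a' k
    calc Nat.choose (a' + 1) (k + 1) * Nat.factorial (k + 1)
        = (Nat.choose (a' + 1) (k + 1) * (k + 1)) * Nat.factorial k := by
          rw [Nat.factorial_succ]; ring
      _ = (a' + 1) * Nat.choose a' k * Nat.factorial k := by rw [← h]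
      _ = (a' + 1) * Nat.choose (a' + 1 - 1) k * Nat.factorial k := by simp

lemma Srec (X Y : ℂ) (a b : ℕ) :
    (∑ k ∈ Finset.range (b + 1 + 1), (Nat.choose (b + 1) k : ℂ) * (Nat.choose a k : ℂ) *
        (Nat.factorial k : ℂ) * X ^ (a - k) * X ^ (b + 1 - k) * Y ^ k) =
      X * (∑ k ∈ Finset.range (b + 1), (Nat.choose b k : ℂ) * (Nat.choose a k : ℂ) *
        (Nat.factorial k : ℂ) * X ^ (a - k) * X ^ (b - k) * Y ^ k) +
      (a : ℂ) * Y * (∑ k ∈ Finset.range (b + 1), (Nat.choose b k : ℂ) *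
        (Nat.choose (a - 1) k : ℂ) * (Nat.factorial k : ℂ) * X ^ (a - 1 - k) * X ^ (b - k) * Y ^ k) := by
  rw [Finset.sum_range_succ']
  -- expand RHS sums
  rw [Finset.mul_sum, Finset.mul_sum]
  -- reindex the first RHS sum
  rw [Finset.sum_range_succ' (fun k => X * ((Nat.choose b k : ℂ) * (Nat.choose a k : ℂ) *
        (Nat.factorial k : ℂ) * X ^ (a - k) * X ^ (b - k) * Y ^ k)) b]
  -- split LHS terms by Pascal
  have hsplit : ∀ k ∈ Finset.range (b + 1),
      (Nat.choose (b + 1) (k + 1) : ℂ) * (Nat.choose a (k + 1) : ℂ) *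
        (Nat.factorial (k + 1) : ℂ) * X ^ (a - (k + 1)) * X ^ (b + 1 - (k + 1)) * Y ^ (k + 1) =
      ((Nat.choose b (k + 1) : ℂ) * (Nat.choose a (k + 1) : ℂ) *
        (Nat.factorial (k + 1) : ℂ) * X ^ (a - (k + 1)) * X ^ (b - k) * Y ^ (k + 1)) +
      ((a : ℂ) * Y * ((Nat.choose b k : ℂ) * (Nat.choose (a - 1) k : ℂ) *
        (Nat.factorial k : ℂ) * X ^ (a - 1 - k) * X ^ (b - k) * Y ^ k)) := by
    intro k hk
    have hp : (Nat.choose (b + 1) (k + 1) : ℂ) = (Nat.choose b k : ℂ) + (Nat.choose b (k + 1) : ℂ) := by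
      exact_mod_cast congrArg (Nat.cast (R := ℂ)) (Nat.choose_succ_succ b k)
    have hcf : (Nat.choose a (k + 1) : ℂ) * (Nat.factorial (k + 1) : ℂ) =
        (a : ℂ) * (Nat.choose (a - 1) k : ℂ) * (Nat.factorial k : ℂ) := by
      rw [← Nat.cast_mul, chooseFact a k]
      push_cast
      ring
    have he1 : b + 1 - (k + 1) = b - k := by omega
    have he2 : a - (k + 1) = a - 1 - k := by omega
    rw [hp, he1, he2]
    linear_combination ((Nat.choose b k : ℂ) * X ^ (a - 1 - k) * X ^ (b - k) * Y ^ (k + 1)) * hcf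
  rw [Finset.sum_congr rfl hsplit, Finset.sum_add_distrib]
  have hfirst : (∑ k ∈ Finset.range (b + 1),
      (Nat.choose b (k + 1) : ℂ) * (Nat.choose a (k + 1) : ℂ) *
        (Nat.factorial (k + 1) : ℂ) * X ^ (a - (k + 1)) * X ^ (b - k) * Y ^ (k + 1)) =
      ∑ k ∈ Finset.range b, X * ((Nat.choose b (k + 1) : ℂ) * (Nat.choose a (k + 1) : ℂ) *
        (Nat.factorial (k + 1) : ℂ) * X ^ (a - (k + 1)) * X ^ (b - (k + 1)) * Y ^ (k + 1)) := by
    rw [Finset.sum_range_succ]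
    simp only [Nat.choose_succ_self, Nat.cast_zero]
    rw [zero_mul, zero_mul, zero_mul, zero_mul, zero_mul, add_zero]
    refine Finset.sum_congr rfl fun k hk => ?_
    have hkb : k < b := Finset.mem_range.mp hk
    have : b - k = (b - (k + 1)) + 1 := by omega
    rw [this, pow_succ]
    ring
  rw [hfirst]
  have hzero : (Nat.choose (b + 1) 0 : ℂ) * (Nat.choose a 0 : ℂ) * (Nat.factorial 0 : ℂ) *
      X ^ (a - 0) * X ^ (b + 1 - 0) * Y ^ 0 =
      X * ((Nat.choose b 0 : ℂ) * (Nat.choose a 0 : ℂ) * (Nat.factorial 0 : ℂ) *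
        X ^ (a - 0) * X ^ (b - 0) * Y ^ 0) := by
    simp [pow_succ]
    ring
  rw [hzero]
  ring

lemma Trec (s : ℕ) (r : ℝ) (a b : ℕ) :
    Tval s r a (b + 1) = XX s r * Tval s r a b + (a : ℂ) * qq r ^ 2 * Tval s r (a - 1) b := by
  unfold Tval Sval
  rw [Srec (XX s r) (qq r ^ 2) a b]
  ring

lemma Wlem {r : ℝ} (h : (1 : ℂ) - (r : ℂ) ^ 2 ≠ 0) (L : List (Fin s)) :
    L.Nodup → ∀ A : Finset (Fin s),
      ((L.map Sum.inr).foldr pd (Phi s A)) (fun _ => (-(r : ℂ))) =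
        Tval s r A.card L.length := by
  induction L using List.reverseRecOn with
  | nil =>
    intro _ A
    simp only [List.map_nil, List.foldr_nil, List.length_nil]
    rw [Phi_pt A]
    unfold Tval Sval
    simp
  | append_singleton L b ih =>
    intro hL A
    have hbL : b ∉ L := by
      intro hb
      have := List.disjoint_of_nodup_append hL
      exact this hb (by simp)
    have hLnd : L.Nodup := (List.nodup_append.mp hL).1
    set pt : (Fin s ⊕ Fin s) → ℂ := fun _ => (-(r : ℂ)) with hpt_def
    have hpt : pt ∈ U s := pt_mem_U h
    have e1 : ((L ++ [b]).map Sum.inr).foldr pd (Phi s A) =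
        (L.map Sum.inr).foldr pd (pd (Sum.inr b) (Phi s A)) := by
      rw [List.map_append, List.foldr_append]
      rfl
    set c : Option (Fin s) → ((Fin s ⊕ Fin s) → ℂ) → ℂ :=
      fun o => o.elim (fb s b) (fun i => gp s i b) with hc_def
    set A' : Option (Fin s) → Finset (Fin s) :=
      fun o => o.elim A (fun i => A.erase i) with hA'_def
    set T : Finset (Option (Fin s)) := insert none (A.image some) with hT_def
    have e3 : (fun v => fb s b v * Phi s A v + ∑ i ∈ A, gp s i b v * Phi s (A.erase i) v)
        = fun v => ∑ t ∈ T, c t v * Phi s (A' t) v := by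
      funext v
      rw [hT_def, Finset.sum_insert (by simp)]
      congr 1
      rw [Finset.sum_image (fun x _ y _ hxy => Option.some_injective _ hxy)]
      exact Finset.sum_congr rfl fun x _ => rfl
    have e2 : Set.EqOn ((L.map Sum.inr).foldr pd (pd (Sum.inr b) (Phi s A)))
        ((L.map Sum.inr).foldr pd (fun v => ∑ t ∈ T, c t v * Phi s (A' t) v)) (U s) := by
      refine pd_congr_foldr isOpen_U _ ?_
      exact (K2 A b).trans (by rw [e3]; exact fun v hv => rfl)
    have hc1 : ∀ t ∈ T, ContDiffOn ℂ (⊤ : ℕ∞) (c t) (U s) := by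
      intro t _
      cases t with
      | none => exact contDiffOn_fb b
      | some i => exact contDiffOn_gp i b
    have hc2 : ∀ t ∈ T, ∀ j ∈ L, ∀ v x, c t (Function.update v (Sum.inr j) x) = c t v := by
      intro t _ j hj v x
      have hjb : j ≠ b := fun hjb => hbL (hjb ▸ hj)
      cases t with
      | none => exact fb_update j hjb v x
      | some i => exact gp_update j hjb v x
    have e4 := LIN L T c A' hc1 hc2
    have := e2.trans e4
    rw [e1]
    rw [this hpt]
    -- evaluate the sum
    beta_reduce
    rw [Finset.sum_insert (by simp),
      Finset.sum_image (fun x _ y _ hxy => Option.some_injective _ hxy)]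
    have hnone : c none pt = XX s r := fb_pt b
    have hsome : ∀ i ∈ A, c (some i) pt = qq r ^ 2 := fun i _ => gp_pt h i b
    rw [hnone]
    rw [show (A' none) = A from rfl]
    rw [ih hLnd A]
    have hterm : ∀ i ∈ A, c (some i) pt * ((L.map Sum.inr).foldr pd (Phi s (A' (some i)))) pt
        = qq r ^ 2 * Tval s r (A.card - 1) L.length := by
      intro i hi
      rw [hsome i hi, show A' (some i) = A.erase i from rfl, ih hLnd (A.erase i),
        Finset.card_erase_of_mem hi]
    rw [Finset.sum_congr rfl hterm, Finset.sum_const, nsmul_eq_mul]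
    rw [show (L ++ [b]).length = L.length + 1 by simp]
    rw [Trec s r A.card L.length]
    ring

/-- The list of the first `s - h₂` `w`-variables followed by the first `s - h₁`
`z`-variables. -/
def varList (s h₁ h₂ : ℕ) : List (Fin s ⊕ Fin s) :=
  ((List.finRange (s - h₂)).map fun j => Sum.inr (Fin.castLE (Nat.sub_le s h₂) j)) ++
    ((List.finRange (s - h₁)).map fun i => Sum.inl (Fin.castLE (Nat.sub_le s h₁) i))

/-- The mixed partial derivative
`(∂/∂w₁)⋯(∂/∂w_{s-h₂}) (∂/∂z₁)⋯(∂/∂z_{s-h₁}) F`. -/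
noncomputable def mixedDerivF (s h₁ h₂ : ℕ) : ((Fin s ⊕ Fin s) → ℂ) → ℂ :=
  (varList s h₁ h₂).foldr pd (FF s)

lemma Tval_eq (s h₁ h₂ : ℕ) (h12 : h₁ ≤ h₂) (h2s : h₂ ≤ s) (h1s : h₁ ≤ s) (r : ℝ) :
    Tval s r (s - h₁) (s - h₂) =
      (-(s : ℂ) * (r : ℂ)) ^ (h₂ - h₁) / (1 - (r : ℂ) ^ 2) ^ (s ^ 2 + 2 * s - h₁ - h₂) *
        ∑ k ∈ Finset.range (s - h₂ + 1),
          (Nat.choose (s - h₂) k : ℂ) * (Nat.choose (s - h₁) (h₂ - h₁ + k) : ℂ) *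
            (Nat.factorial (s - k - h₂) : ℂ) * ((s : ℂ) ^ 2 * (r : ℂ) ^ 2) ^ k := by
  set a := s - h₁ with ha
  set b := s - h₂ with hb
  unfold Tval Sval
  rw [← Finset.sum_range_reflect (fun k => (Nat.choose b k : ℂ) * (Nat.choose a k : ℂ) *
    (Nat.factorial k : ℂ) * XX s r ^ (a - k) * XX s r ^ (b - k) * (qq r ^ 2) ^ k) (b + 1)]
  rw [div_eq_mul_inv]
  rw [← inv_pow]
  rw [mul_assoc]
  rw [Finset.mul_sum]
  rw [Finset.mul_sum]
  rw [Finset.mul_sum]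
  refine Finset.sum_congr rfl fun k hk => ?_
  have hkb : k ≤ b := by
    have := Finset.mem_range.mp hk
    omega
  have hba : b ≤ a := by omega
  rw [show b + 1 - 1 - k = b - k from by omega]
  rw [show Nat.choose b (b - k) = Nat.choose b k from Nat.choose_symm hkb]
  rw [show Nat.choose a (b - k) = Nat.choose a (h₂ - h₁ + k) from by
    rw [show h₂ - h₁ + k = a - (b - k) from by omega]
    exact (Nat.choose_symm (by omega)).symm]
  rw [show a - (b - k) = h₂ - h₁ + k from by omega,
    show b - (b - k) = k from by omega,
    show (Nat.factorial (b - k) : ℂ) = (Nat.factorial (s - k - h₂) : ℂ) from by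
      rw [show b - k = s - k - h₂ from by omega],
    show s ^ 2 + 2 * s - h₁ - h₂ = s ^ 2 + ((h₂ - h₁) + (2 * k + 2 * (b - k))) from by omega,
    show ((s : ℂ) ^ 2 * (r : ℂ) ^ 2) = (-(s : ℂ) * (r : ℂ)) * (-(s : ℂ) * (r : ℂ)) from by ring]
  simp only [pow_add, mul_pow, ← pow_mul, XX]
  rw [show ((1 : ℂ) - (r : ℂ) ^ 2)⁻¹ = qq r from rfl]
  ring


theorem mixed_derivative_F_at_diagonal (s h₁ h₂ : ℕ) (hs : 1 ≤ s)
    (h12 : h₁ ≤ h₂) (h2s : h₂ ≤ s) (r : ℝ) (hr0 : 0 ≤ r) (hr1 : r ≠ 1) :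
    mixedDerivF s h₁ h₂ (fun _ => (-r : ℂ)) =
      (-(s : ℂ) * (r : ℂ)) ^ (h₂ - h₁) / (1 - (r : ℂ) ^ 2) ^ (s ^ 2 + 2 * s - h₁ - h₂) *
        ∑ k ∈ Finset.range (s - h₂ + 1),
          (Nat.choose (s - h₂) k : ℂ) * (Nat.choose (s - h₁) (h₂ - h₁ + k) : ℂ) *
            (Nat.factorial (s - k - h₂) : ℂ) * ((s : ℂ) ^ 2 * (r : ℂ) ^ 2) ^ k := by
  have h1s : h₁ ≤ s := le_trans h12 h2s
  have hq : (1 : ℂ) - (r : ℂ) ^ 2 ≠ 0 := by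
    intro heq
    have hr2 : r ^ 2 = 1 := by
      have h' : ((r : ℂ)) ^ 2 = 1 := by
        have := sub_eq_zero.mp heq
        exact this.symm
      exact_mod_cast h'
    have h3 : (r - 1) * (r + 1) = 0 := by nlinarith
    rcases mul_eq_zero.mp h3 with h4 | h4
    · exact hr1 (by linarith)
    · nlinarith
  set Lz : List (Fin s) := (List.finRange (s - h₁)).map (Fin.castLE (Nat.sub_le s h₁)) with hLz
  set Lw : List (Fin s) := (List.finRange (s - h₂)).map (Fin.castLE (Nat.sub_le s h₂)) with hLw
  have hzn : Lz.Nodup := (List.nodup_finRange _).map (Fin.castLE_injective _)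
  have hwn : Lw.Nodup := (List.nodup_finRange _).map (Fin.castLE_injective _)
  have hsplit : mixedDerivF s h₁ h₂ =
      (Lw.map Sum.inr).foldr pd ((Lz.map Sum.inl).foldr pd (FF s)) := by
    unfold mixedDerivF varList
    rw [List.foldr_append, hLz, hLw, List.map_map, List.map_map]
    rfl
  have hz := zfold Lz hzn
  have hfold := pd_congr_foldr isOpen_U (Lw.map Sum.inr) hz
  have hpt : (fun _ => (-(r : ℂ)) : (Fin s ⊕ Fin s) → ℂ) ∈ U s := pt_mem_U hq
  have hW := Wlem hq Lw hwn Lz.toFinset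
  have hcard : Lz.toFinset.card = s - h₁ := by
    rw [List.toFinset_card_of_nodup hzn, hLz, List.length_map, List.length_finRange]
  have hlen : Lw.length = s - h₂ := by
    rw [hLw, List.length_map, List.length_finRange]
  rw [hsplit]
  have := hfold hpt
  rw [show (fun _ => (-r : ℂ)) = (fun _ => (-(r : ℂ)) : (Fin s ⊕ Fin s) → ℂ) from rfl]
  rw [this, hW, hcard, hlen]
  exact Tval_eq s h₁ h₂ h12 h2s h1s r

end MixedDeriv
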